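/- Let P be an orthogonal projection on ℂ^{2E}, Q = 1 - P, and L a self adjoint endomorphism of ℂ^{2E} with L = QLQ (i.e., L vanishes on ran P). For real k with L + ik invertible, define S(k) = -P - Q(L + ik)^{-1}(L - ik)Q. Then S(k) is unitary for all k ∈ ℝ. -/

import Mathlib

open Matrix

/-- The edge S-matrix in the Kuchment projector parametrisation:
S(k) = -P - Q (L + ik)⁻¹ (L - ik) Q with Q = 1 - P. -/
noncomputable def SPL {n : Type*} [Fintype n] [DecidableEq n]
    (P L : Matrix n n ℂ) (k : ℂ) : Matrix n n ℂ :=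
  -P - (1 - P) * (L + (Complex.I * k) • 1)⁻¹ * (L - (Complex.I * k) • 1) * (1 - P)

/-- if P is an orthogonal projection, Q = 1 - P, and L is self adjoint
with PL = LP = 0, then for every real k with L + ik invertible the matrix
S(k) = -P - Q(L+ik)⁻¹(L-ik)Q is unitary. -/
theorem stmt_3 (E : ℕ) (P L : Matrix (Fin (2*E)) (Fin (2*E)) ℂ)
    (hP : P.IsHermitian) (hP2 : P * P = P)
    (hL : L.IsHermitian) (hPL : P * L = 0) (hLP : L * P = 0) :
    ∀ k : ℝ, IsUnit (L + (Complex.I * (k : ℂ)) • 1) →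
      SPL P L (k : ℂ) ∈ Matrix.unitaryGroup (Fin (2*E)) ℂ := by
  intro k hk
  set c : ℂ := Complex.I * (k : ℂ) with hc
  set A : Matrix (Fin (2*E)) (Fin (2*E)) ℂ := L + c • 1 with hAdef
  have hdet : IsUnit A.det := (Matrix.isUnit_iff_isUnit_det A).mp hk
  have hstarc : star c = -c := by
    simp only [hc, Complex.star_def, _root_.map_mul, Complex.conj_I, Complex.conj_ofReal]
    ring
  have hAH : Aᴴ = L - c • 1 := by
    simp [hAdef, conjTranspose_add, conjTranspose_smul, hL.eq, hstarc,
      sub_eq_add_neg, neg_smul]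
  set Q : Matrix (Fin (2*E)) (Fin (2*E)) ℂ := 1 - P with hQdef
  set U : Matrix (Fin (2*E)) (Fin (2*E)) ℂ := A⁻¹ * Aᴴ with hUdef
  have hS : SPL P L (k : ℂ) = -(P + Q * U * Q) := by
    simp [SPL, hQdef, hUdef, hAdef, hAH, hc, hL.eq]
    noncomm_ring
  -- basic projector facts
  have hQQ : Q * Q = Q := by
    simp [hQdef, mul_sub, sub_mul, hP2]
  have hQH : Qᴴ = Q := by simp [hQdef, hP.eq]
  have hPQ : P * Q = 0 := by simp [hQdef, mul_sub, hP2]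
  have hQP : Q * P = 0 := by simp [hQdef, sub_mul, hP2]
  -- Q commutes with A, Aᴴ, A⁻¹
  have hQA : Q * A = A * Q := by
    simp only [hQdef, hAdef, sub_mul, mul_sub, one_mul, mul_one,
      Matrix.mul_smul, Matrix.smul_mul, mul_add, add_mul, hPL, hLP]
    simp
    abel
  have hQAH : Q * Aᴴ = Aᴴ * Q := by
    have := congrArg conjTranspose hQA
    simpa [conjTranspose_mul, hQH] using this.symm
  have hQAinv : Q * A⁻¹ = A⁻¹ * Q := by
    calc Q * A⁻¹ = A⁻¹ * (A * (Q * A⁻¹)) := by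
          rw [← mul_assoc, Matrix.nonsing_inv_mul A hdet, one_mul]
      _ = A⁻¹ * (Q * (A * A⁻¹)) := by rw [← mul_assoc A Q, ← hQA, mul_assoc]
      _ = A⁻¹ * Q := by rw [Matrix.mul_nonsing_inv A hdet, mul_one]
  have hQU : Q * U = U * Q := by
    rw [hUdef, ← mul_assoc, hQAinv, mul_assoc, hQAH, ← mul_assoc]
  -- U is unitary
  have hAAH : A * Aᴴ = Aᴴ * A := by
    rw [hAH, hAdef]
    simp only [mul_sub, sub_mul, mul_add, add_mul, Matrix.mul_smul, Matrix.smul_mul,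
      one_mul, mul_one]
    abel
  have hdetH : IsUnit Aᴴ.det := by
    simpa [Matrix.det_conjTranspose] using hdet.star
  have hUUH : U * Uᴴ = 1 := by
    rw [hUdef, conjTranspose_mul, conjTranspose_nonsing_inv, conjTranspose_conjTranspose]
    calc A⁻¹ * Aᴴ * (A * Aᴴ⁻¹) = A⁻¹ * (Aᴴ * A) * Aᴴ⁻¹ := by noncomm_ring
      _ = A⁻¹ * (A * Aᴴ) * Aᴴ⁻¹ := by rw [hAAH]
      _ = 1 := by
          rw [← mul_assoc, Matrix.nonsing_inv_mul A hdet, one_mul,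
            Matrix.mul_nonsing_inv _ hdetH]
  have hUHU : Uᴴ * U = 1 := mul_eq_one_comm.mp hUUH
  have hQUH : Q * Uᴴ = Uᴴ * Q := by
    have := congrArg conjTranspose hQU
    simpa [conjTranspose_mul, hQH] using this.symm
  have hQUQ : Q * U * Q = U * Q := by rw [hQU, mul_assoc, hQQ]
  have hQUHQ : Q * Uᴴ * Q = Uᴴ * Q := by rw [hQUH, mul_assoc, hQQ]
  -- now verify unitarity
  rw [hS]
  constructor
  · show star (-(P + Q * U * Q)) * (-(P + Q * U * Q)) = 1
    have hstar : star (-(P + Q * U * Q)) = -(P + Q * Uᴴ * Q) := by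
      show (-(P + Q * U * Q))ᴴ = _
      simp [conjTranspose_add, conjTranspose_mul, hQH, hP.eq, mul_assoc]
    rw [hstar, neg_mul_neg, add_mul, mul_add, mul_add, hP2]
    have h1 : P * (Q * U * Q) = 0 := by
      rw [← mul_assoc, ← mul_assoc, hPQ, zero_mul, zero_mul]
    have h2 : Q * Uᴴ * Q * P = 0 := by
      rw [mul_assoc, hQP, mul_zero]
    have h3 : Q * Uᴴ * Q * (Q * U * Q) = Q := by
      rw [hQUHQ, hQUQ, mul_assoc Uᴴ Q (U * Q), ← mul_assoc Q U Q, hQU,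
        mul_assoc U Q Q, hQQ, ← mul_assoc Uᴴ U Q, hUHU, one_mul]
    rw [h1, h2, h3, add_zero, zero_add]
    simp [hQdef]
  · show (-(P + Q * U * Q)) * star (-(P + Q * U * Q)) = 1
    have hstar : star (-(P + Q * U * Q)) = -(P + Q * Uᴴ * Q) := by
      show (-(P + Q * U * Q))ᴴ = _
      simp [conjTranspose_add, conjTranspose_mul, hQH, hP.eq, mul_assoc]
    rw [hstar, neg_mul_neg, add_mul, mul_add, mul_add, hP2]
    have h1 : P * (Q * Uᴴ * Q) = 0 := by
      rw [← mul_assoc, ← mul_assoc, hPQ, zero_mul, zero_mul]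
    have h2 : Q * U * Q * P = 0 := by
      rw [mul_assoc, hQP, mul_zero]
    have h3 : Q * U * Q * (Q * Uᴴ * Q) = Q := by
      rw [hQUQ, hQUHQ, mul_assoc U Q (Uᴴ * Q), ← mul_assoc Q Uᴴ Q, hQUH,
        mul_assoc Uᴴ Q Q, hQQ, ← mul_assoc U Uᴴ Q, hUUH, one_mul]
    rw [h1, h2, h3, add_zero, zero_add]
    simp [hQdef]
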